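/- Let g = ∑_{n≥0} g_n z^n ∈ ℚ[[z]] be a power series solution of g(z) − (1/2)(z−1) g(z²) − (1/2) z g(z⁴) = (1/(2z)) f_RS(z) − (1/(2z)) f_RS(z⁴), where f_RS is the Rudin–Shapiro generating series. Then for all n ≥ 1, g_{2^n} = (1/2) a_{2^n + 1} − (1/2) g_{2^{n−1}}, and consequently the 2-adic valuation of g_{2^n} equals −(n+1) (i.e., g_{2^n} = c/2^{n+1} with c an odd integer), so the logarithmic heights h(g_{2^n}) grow at least linearly in n. -/

import Mathlib

open PowerSeries

/-- let `g = ∑ g_n z^n ∈ ℚ[[z]]` be a power series solution of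
`g(z) − ½(z−1)g(z²) − ½ z g(z⁴) = (1/(2z))(f_RS(z) − f_RS(z⁴))`, stated equivalently
after multiplication by `2z` as a power series identity, where `f_RS = ∑ a_n z^n` is the
Rudin–Shapiro generating series.  Then `g_{2^n} = ½ a_{2^n+1} − ½ g_{2^{n−1}}` for all
`n ≥ 1`, the 2-adic valuation of `g_{2^n}` equals `−(n+1)`, and the logarithmic Weil
heights `h(g_{2^n}) = log max(|num|, den)` grow at least linearly in `n`. -/
theorem stmt17 (a : ℕ → ℤ)
    (h0 : a 0 = 1)
    (he : ∀ n, a (2 * n) = a n)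
    (ho : ∀ n, a (2 * n + 1) = (-1) ^ n * a n)
    (g : ℕ → ℚ)
    (hg : 2 * PowerSeries.X * PowerSeries.mk g
        - PowerSeries.X * (PowerSeries.X - 1) *
            PowerSeries.mk (fun n => if 2 ∣ n then g (n / 2) else 0)
        - PowerSeries.X ^ 2 *
            PowerSeries.mk (fun n => if 4 ∣ n then g (n / 4) else 0)
      = PowerSeries.mk (fun n => (a n : ℚ))
        - PowerSeries.mk (fun n => if 4 ∣ n then (a (n / 4) : ℚ) else 0)) :
    (∀ n : ℕ, 1 ≤ n →
      g (2 ^ n) = (1 / 2) * (a (2 ^ n + 1) : ℚ) - (1 / 2) * g (2 ^ (n - 1))) ∧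
    (∀ n : ℕ, padicValRat 2 (g (2 ^ n)) = -((n : ℤ) + 1)) ∧
    (∃ c : ℝ, 0 < c ∧ ∀ n : ℕ,
      c * n ≤ Real.log (max |((g (2 ^ n)).num : ℝ)| ((g (2 ^ n)).den : ℝ))) := by
  set b : ℕ → ℚ := fun n => if 2 ∣ n then g (n / 2) else 0 with hb
  set c : ℕ → ℚ := fun n => if 4 ∣ n then g (n / 4) else 0 with hc
  have e : (2 : ℚ⟦X⟧) * X * mk g - X * (X-1) * mk b - X^2 * mk c
      = (X*(C 2 * mk g) - (X*(X*(mk b)) - X*(mk b)) - X*(X*(mk c))) := by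
    rw [map_ofNat]; ring
  rw [e] at hg
  have key : ∀ m : ℕ, 2 * g (m+1) - (b m - b (m+1)) - c m
      = (a (m+2) : ℚ) - (if 4 ∣ (m+2) then (a ((m+2)/4) : ℚ) else 0) := by
    intro m
    have h := congrArg (coeff (m+2)) hg
    simpa [coeff_succ_X_mul, coeff_C_mul] using h
  -- g 0 = 1/3
  have a1 : a 1 = 1 := by have := ho 0; simpa [h0] using this
  have a2 : a 2 = 1 := by have := he 1; norm_num at this; omega
  have hg0 : g 0 = 1/3 := by
    have h := congrArg (coeff 1) hg
    simp [coeff_succ_X_mul, coeff_C_mul, coeff_zero_X_mul, coeff_mk, a1, hb] at h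
    linarith
  have hg1 : g 1 = 5/6 := by
    have h := key 0
    rw [if_neg (by omega)] at h
    simp [hb, hc, hg0, a2] at h
    linarith
  -- part 1
  have part1 : ∀ n : ℕ, 1 ≤ n →
      g (2 ^ n) = (1 / 2) * (a (2 ^ n + 1) : ℚ) - (1 / 2) * g (2 ^ (n - 1)) := by
    intro n hn
    obtain ⟨k, rfl⟩ : ∃ k, n = k + 1 := ⟨n - 1, by omega⟩
    have ht1 : 1 ≤ 2 ^ k := Nat.one_le_two_pow
    set t := 2 ^ k with htdef
    have h2 : 2 ^ (k+1) = 2 * t := by rw [pow_succ]; ring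
    have h := key (2 * t - 1)
    rw [show 2*t - 1 + 1 = 2*t from by omega, show 2*t - 1 + 2 = 2*t+1 from by omega] at h
    have d1 : ¬ (2 ∣ (2*t - 1)) := by omega
    have d2 : (2 : ℕ) ∣ 2*t := ⟨t, rfl⟩
    have d3 : ¬ (4 ∣ (2*t - 1)) := by omega
    have d4 : ¬ (4 ∣ (2*t + 1)) := by omega
    simp only [hb, hc, if_neg d1, if_pos d2, if_neg d3, if_neg d4,
      show (2*t)/2 = t from by omega] at h
    rw [h2, Nat.add_sub_cancel]
    linarith
  refine ⟨part1, ?_⟩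
  -- a (2^n) = 1 and a (2^n + 1) = ±1
  have hpow : ∀ n : ℕ, a (2 ^ n) = 1 := by
    intro n
    induction n with
    | zero => simpa using a1
    | succ k ih => rw [pow_succ, mul_comm, he]; exact ih
  have hA : ∀ n : ℕ, a (2 ^ n + 1) = 1 ∨ a (2 ^ n + 1) = -1 := by
    intro n
    cases n with
    | zero => left; simpa using a2
    | succ k =>
      rw [pow_succ, mul_comm, ho, hpow, mul_one]
      rcases Nat.even_or_odd (2 ^ k) with h | h
      · left; exact h.neg_one_pow
      · right; exact h.neg_one_pow
  -- part 2
  have part2 : ∀ n : ℕ, padicValRat 2 (g (2 ^ n)) = -((n : ℤ) + 1) := by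
    intro n
    induction n with
    | zero =>
      rw [pow_zero, hg1]
      rw [show (5/6 : ℚ) = (5:ℚ)/(3:ℚ)/(2:ℚ) from by norm_num,
        padicValRat.div (by norm_num) (by norm_num),
        padicValRat.div (by norm_num) (by norm_num),
        show ((5:ℚ)) = ((5:ℕ):ℚ) from by norm_num,
        show ((3:ℚ)) = ((3:ℕ):ℚ) from by norm_num,
        show ((2:ℚ)) = ((2:ℕ):ℚ) from by norm_num,
        padicValRat.of_nat, padicValRat.of_nat, padicValRat.of_nat,
        padicValNat.eq_zero_of_not_dvd (by norm_num),
        padicValNat.eq_zero_of_not_dvd (by norm_num),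
        padicValNat.self (by norm_num)]
      norm_num
    | succ k ih =>
      have hrec := part1 (k+1) (by omega)
      rw [Nat.add_sub_cancel] at hrec
      set z : ℤ := a (2 ^ (k+1) + 1) with hz
      set q : ℚ := g (2 ^ k) with hq
      have hz01 : z = 1 ∨ z = -1 := hA (k+1)
      have hvz : padicValRat 2 ((z : ℚ)) = 0 := by
        rcases hz01 with h | h <;> simp [h]
      have hzne : (z : ℚ) ≠ 0 := by rcases hz01 with h | h <;> simp [h]
      have hqne : q ≠ 0 := by
        intro h0'
        rw [h0'] at ih
        simp at ih
        omega
      have hvne : padicValRat 2 ((z:ℚ)) ≠ padicValRat 2 (-q) := by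
        rw [hvz, padicValRat.neg, ih]; omega
      have hsne : (z : ℚ) + (-q) ≠ 0 := by
        intro h
        apply hvne
        have : (z : ℚ) = q := by linarith [h]
        rw [this, padicValRat.neg]
      have hmin : padicValRat 2 ((z:ℚ) - q) = -((k:ℤ) + 1) := by
        rw [sub_eq_add_neg, padicValRat.add_eq_min hsne hzne (neg_ne_zero.mpr hqne) hvne,
          hvz, padicValRat.neg, ih]
        omega
      have hval2 : padicValRat 2 ((2:ℚ)) = 1 := by
        rw [show ((2:ℚ)) = ((2:ℕ):ℚ) from by norm_num, padicValRat.of_nat,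
          padicValNat.self (by norm_num)]
        norm_num
      have hdne : (z : ℚ) - q ≠ 0 := by
        rw [sub_ne_zero]
        intro h
        exact hvne (by rw [h, padicValRat.neg])
      have hgk : g (2 ^ (k+1)) = ((z:ℚ) - q) / 2 := by rw [hrec]; ring
      rw [hgk, padicValRat.div hdne (by norm_num),
        hmin, hval2]
      push_cast
      ring
  refine ⟨part2, ⟨Real.log 2, Real.log_pos (by norm_num), ?_⟩⟩
  intro n
  have hv := part2 n
  set q : ℚ := g (2 ^ n) with hq
  have hden : 2 ^ (n+1) ≤ q.den := by
    have hv' : (padicValInt 2 q.num : ℤ) - (padicValNat 2 q.den : ℤ) = -((n:ℤ)+1) := hv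
    have hle : n + 1 ≤ padicValNat 2 q.den := by omega
    have hdvd : 2 ^ (n+1) ∣ q.den :=
      dvd_trans (pow_dvd_pow 2 hle) pow_padicValNat_dvd
    exact Nat.le_of_dvd q.pos hdvd
  have h2n : (2:ℝ) ^ n ≤ (q.den : ℝ) := by
    calc (2:ℝ) ^ n ≤ (2:ℝ) ^ (n+1) := by
          apply pow_le_pow_right₀ (by norm_num); omega
      _ ≤ (q.den : ℝ) := by exact_mod_cast Nat.cast_le.mpr hden
  calc Real.log 2 * n = Real.log ((2:ℝ) ^ n) := by rw [Real.log_pow]; ring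
    _ ≤ Real.log (q.den : ℝ) := Real.log_le_log (by positivity) h2n
    _ ≤ Real.log (max |(q.num : ℝ)| (q.den : ℝ)) :=
        Real.log_le_log (by exact_mod_cast q.pos) (le_max_right _ _)
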